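/- arXiv:2511.01692 — 2 statements merged into one kernel-verified Lean document; each statement's English description precedes it below -/
import Mathlib

section
/- Let P ⊂ ℝⁿ and Σ ⊂ ℝⁿ (the dual space) be bounded convex bodies containing the origin, and let C(P) = {(ty,t) : y ∈ P, t ≥ 0} and C(Σ) = {(tx,t) : x ∈ Σ, t ≥ 0} be the cones over them in ℝ^{n+1}. Then the pair of cones (C(P), C(Σ)) is strongly oblique, i.e. cl(C(P)) \ {0} ⊂ int(C(Σ)^∨), if and only if the pair of links (P,Σ) is strongly oblique, i.e. −cl(P) ⊂ int(Σ°). -/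
open Set MeasureTheory Metric Bornology
open scoped RealInnerProductSpace NNReal Topology

noncomputable section

abbrev Eu (n : ℕ) := EuclideanSpace ℝ (Fin n)

/-- Support function of a set. -/
def suppFn {n : ℕ} (K : Set (Eu n)) (x : Eu n) : ℝ := sSup ((fun y => ⟪x, y⟫) '' K)

/-- Polar dual `K° = {x : φ_K(x) ≤ 1}`. -/
def polarDual {n : ℕ} (K : Set (Eu n)) : Set (Eu n) := {x | suppFn K x ≤ 1}

/-- The cone over a convex body `K ⊂ ℝⁿ`: `C(K) = {(tz, t) : z ∈ K, t ≥ 0} ⊂ ℝⁿ × ℝ`. -/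
def coneOver {n : ℕ} (K : Set (Eu n)) : Set (Eu n × ℝ) :=
  {p | ∃ z ∈ K, ∃ t : ℝ, 0 ≤ t ∧ p = (t • z, t)}

/-- The duality pairing between `ℝⁿ × ℝ` and its dual copy. -/
def pairing {n : ℕ} (p q : Eu n × ℝ) : ℝ := ⟪p.1, q.1⟫ + p.2 * q.2

/-- The dual cone `C^∨ = {x : ⟨x,y⟩ > 0 for all y ∈ C \ {0}}`. -/
def dualCone {n : ℕ} (C : Set (Eu n × ℝ)) : Set (Eu n × ℝ) :=
  {q | ∀ p ∈ C, p ≠ 0 → 0 < pairing p q}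

namespace StronglyObliqueAux

variable {n : ℕ}

lemma bddAbove_image {S : Set (Eu n)} {M : ℝ} (hM : ∀ y ∈ S, ‖y‖ ≤ M) (x : Eu n) :
    BddAbove ((fun y => ⟪x, y⟫) '' S) := by
  refine ⟨‖x‖ * M, ?_⟩
  rintro _ ⟨y, hy, rfl⟩
  calc ⟪x, y⟫ ≤ ‖x‖ * ‖y‖ := real_inner_le_norm x y
    _ ≤ ‖x‖ * M := by
        have := hM y hy
        nlinarith [norm_nonneg x]

lemma inner_le_suppFn {S : Set (Eu n)} {M : ℝ} (hM : ∀ y ∈ S, ‖y‖ ≤ M)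
    {x y : Eu n} (hy : y ∈ S) : ⟪x, y⟫ ≤ suppFn S x :=
  le_csSup (bddAbove_image hM x) ⟨y, hy, rfl⟩

lemma suppFn_nonneg {S : Set (Eu n)} {M : ℝ} (hM : ∀ y ∈ S, ‖y‖ ≤ M)
    (hS0 : (0 : Eu n) ∈ S) (x : Eu n) : 0 ≤ suppFn S x := by
  have h := inner_le_suppFn hM (x := x) hS0
  simpa using h

lemma suppFn_le {S : Set (Eu n)} {x : Eu n} {a : ℝ}
    (h : ∀ y ∈ S, ⟪x, y⟫ ≤ a) (ha : 0 ≤ a) : suppFn S x ≤ a := by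
  refine Real.sSup_le ?_ ha
  rintro _ ⟨y, hy, rfl⟩
  exact h y hy

lemma suppFn_continuous {S : Set (Eu n)} {M : ℝ} (hM : ∀ y ∈ S, ‖y‖ ≤ M)
    (hM0 : 0 ≤ M) (hS0 : (0 : Eu n) ∈ S) : Continuous (suppFn S) := by
  have key : ∀ x x' : Eu n, suppFn S x ≤ suppFn S x' + M * ‖x - x'‖ := by
    intro x x'
    refine suppFn_le (fun y hy => ?_) ?_
    · have h1 : ⟪x, y⟫ = ⟪x', y⟫ + ⟪x - x', y⟫ := by
        rw [inner_sub_left]; ring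
      have h2 : ⟪x - x', y⟫ ≤ ‖x - x'‖ * ‖y‖ := real_inner_le_norm _ _
      have h3 : ‖x - x'‖ * ‖y‖ ≤ ‖x - x'‖ * M := by
        have := hM y hy
        nlinarith [norm_nonneg (x - x')]
      have h4 := inner_le_suppFn hM (x := x') hy
      rw [h1]; nlinarith
    · have := suppFn_nonneg hM hS0 x'
      positivity
  have : LipschitzWith (Real.toNNReal M) (suppFn S) := by
    refine LipschitzWith.of_dist_le_mul (fun x x' => ?_)
    rw [Real.dist_eq, Real.coe_toNNReal M hM0]
    rw [abs_sub_le_iff]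
    constructor
    · have := key x x'
      rw [dist_eq_norm]; linarith
    · have := key x' x
      rw [dist_eq_norm, ← norm_neg, neg_sub]; linarith
  exact this.continuous

lemma suppFn_smul_le {S : Set (Eu n)} {M : ℝ} (hM : ∀ y ∈ S, ‖y‖ ≤ M)
    (hS0 : (0 : Eu n) ∈ S) {c : ℝ} (hc : 0 ≤ c) (x : Eu n) :
    suppFn S (c • x) ≤ c * suppFn S x := by
  refine suppFn_le (fun y hy => ?_) ?_
  · rw [real_inner_smul_left]
    exact mul_le_mul_of_nonneg_left (inner_le_suppFn hM hy) hc
  · exact mul_nonneg hc (suppFn_nonneg hM hS0 x)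

/-- The open "strict" subcone is contained in the dual cone. -/
lemma strict_subset_dualCone {S : Set (Eu n)} {M : ℝ} (hM : ∀ y ∈ S, ‖y‖ ≤ M)
    {q : Eu n × ℝ} (h : suppFn S (-q.1) < q.2) : q ∈ dualCone (coneOver S) := by
  rintro p ⟨z, hz, t, ht, rfl⟩ hne
  have ht' : 0 < t := by
    rcases lt_or_eq_of_le ht with h' | h'
    · exact h'
    · exfalso; apply hne; rw [← h']; simp
  have hz' : ⟪-q.1, z⟫ ≤ suppFn S (-q.1) := inner_le_suppFn hM hz
  have : ⟪z, q.1⟫ + q.2 > 0 := by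
    have : ⟪-q.1, z⟫ = -⟪z, q.1⟫ := by
      rw [inner_neg_left, real_inner_comm]
    linarith [hz'.trans_lt h, this ▸ hz'.trans_lt h]
  have hpair : pairing (t • z, t) q = t * (⟪z, q.1⟫ + q.2) := by
    simp only [pairing, real_inner_smul_left]
    ring
  rw [hpair]
  positivity

end StronglyObliqueAux

open StronglyObliqueAux in
/-- For bounded convex bodies `P`, `Σ` containing the origin, the pair of
cones `(C(P), C(Σ))` is strongly oblique, i.e. `cl(C(P)) \ {0} ⊆ int(C(Σ)^∨)`, if and only
if the pair of links `(P, Σ)` is strongly oblique, i.e. `−cl(P) ⊆ int(Σ°)`. -/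
theorem cone_strongly_oblique_iff_links {n : ℕ} (P S : Set (Eu n))
    (hPconv : Convex ℝ P) (hPbdd : IsBounded P) (hP0 : (0 : Eu n) ∈ P)
    (hSconv : Convex ℝ S) (hSbdd : IsBounded S) (hS0 : (0 : Eu n) ∈ S) :
    closure (coneOver P) \ {0} ⊆ interior (dualCone (coneOver S)) ↔
      (fun y => -y) '' closure P ⊆ interior (polarDual S) := by
  obtain ⟨M₀, hM₀⟩ := isBounded_iff_forall_norm_le.1 hSbdd
  set M : ℝ := max M₀ 0 with hMdef
  have hM : ∀ y ∈ S, ‖y‖ ≤ M := fun y hy => (hM₀ y hy).trans (le_max_left _ _)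
  have hM0 : (0 : ℝ) ≤ M := le_max_right _ _
  obtain ⟨N₀, hN₀⟩ := isBounded_iff_forall_norm_le.1 hPbdd
  set N : ℝ := max N₀ 0 with hNdef
  have hN : ∀ y ∈ P, ‖y‖ ≤ N := fun y hy => (hN₀ y hy).trans (le_max_left _ _)
  have hN0 : (0 : ℝ) ≤ N := le_max_right _ _
  have hcont : Continuous (suppFn S) := suppFn_continuous hM hM0 hS0
  constructor
  · -- cones oblique → links oblique
    rintro h _ ⟨y, hy, rfl⟩
    -- (y, 1) ∈ closure (coneOver P)
    have hmem : ((y, 1) : Eu n × ℝ) ∈ closure (coneOver P) := by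
      have himg : (fun z : Eu n => ((z, 1) : Eu n × ℝ)) '' P ⊆ coneOver P := by
        rintro _ ⟨z, hz, rfl⟩
        exact ⟨z, hz, 1, zero_le_one, by simp⟩
      have hc : Continuous (fun z : Eu n => ((z, 1) : Eu n × ℝ)) := by fun_prop
      have := image_closure_subset_closure_image (s := P) hc ⟨y, hy, rfl⟩
      exact closure_mono himg this
    have hmem' : ((y, 1) : Eu n × ℝ) ∈ interior (dualCone (coneOver S)) :=
      h ⟨hmem, by simp⟩
    obtain ⟨ε, hε, hball⟩ := Metric.isOpen_iff.1 isOpen_interior _ hmem'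
    set δ : ℝ := min (ε / 2) (1 / 2) with hδdef
    have hδpos : 0 < δ := by positivity
    have hδlt1 : δ < 1 := lt_of_le_of_lt (min_le_right _ _) (by norm_num)
    have hq : ((y, 1 - δ) : Eu n × ℝ) ∈ dualCone (coneOver S) := by
      have : dist ((y, 1 - δ) : Eu n × ℝ) (y, 1) < ε := by
        rw [Prod.dist_eq]
        simp only [dist_self, Real.dist_eq]
        have : |1 - δ - 1| = δ := by rw [abs_of_nonpos (by linarith)]; ring
        rw [this]
        have : δ ≤ ε / 2 := min_le_left _ _
        calc max 0 δ = δ := max_eq_right hδpos.le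
          _ < ε := by linarith
      exact interior_subset (hball this)
    -- derive suppFn S (-y) ≤ 1 - δ
    have hsupp : suppFn S (-y) ≤ 1 - δ := by
      refine suppFn_le (fun x hx => ?_) (by linarith)
      have hpx : ((x, 1) : Eu n × ℝ) ∈ coneOver S := ⟨x, hx, 1, zero_le_one, by simp⟩
      have hne : ((x, 1) : Eu n × ℝ) ≠ 0 := by
        intro hcontra
        have : (1 : ℝ) = 0 := congrArg Prod.snd hcontra
        norm_num at this
      have := hq _ hpx hne
      simp only [pairing] at this
      have hinner : ⟪-y, x⟫ = -⟪x, y⟫ := by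
        rw [inner_neg_left, real_inner_comm]
      rw [hinner]; linarith
    have : suppFn S (-y) < 1 := by linarith
    have hopen : IsOpen {x : Eu n | suppFn S x < 1} := isOpen_lt hcont continuous_const
    have hsub : {x : Eu n | suppFn S x < 1} ⊆ polarDual S :=
      fun x hx => show suppFn S x ≤ 1 from le_of_lt hx
    exact interior_maximal hsub hopen this
  · -- links oblique → cones oblique
    intro h
    -- first: suppFn S (-y) < 1 for all y ∈ closure P
    have hstrict : ∀ y ∈ closure P, suppFn S (-y) < 1 := by
      intro y hy
      have hmem : -y ∈ interior (polarDual S) := h ⟨y, hy, rfl⟩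
      obtain ⟨ε, hε, hball⟩ := Metric.isOpen_iff.1 isOpen_interior _ hmem
      -- scale up slightly
      by_cases hy0 : y = 0
      · subst hy0
        have : suppFn S (-(0:Eu n)) = 0 := by
          have h1 := suppFn_nonneg hM hS0 (-(0:Eu n))
          have h2 : suppFn S (-(0:Eu n)) ≤ 0 := by
            refine suppFn_le (fun z hz => ?_) le_rfl
            simp
          linarith
        rw [this]; norm_num
      · have hny : 0 < ‖y‖ := norm_pos_iff.2 hy0
        set c : ℝ := 1 + ε / (2 * ‖y‖) with hcdef
        have hc1 : 1 < c := by
          rw [hcdef]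
          have : 0 < ε / (2 * ‖y‖) := by positivity
          linarith
        have hc0 : 0 < c := by linarith
        have hmem2 : c • (-y) ∈ polarDual S := by
          refine interior_subset (hball ?_)
          rw [mem_ball, dist_eq_norm]
          have : c • (-y) - (-y) = (c - 1) • (-y) := by
            rw [sub_smul, one_smul]
          rw [this, norm_smul]
          simp only [norm_neg, Real.norm_eq_abs, abs_of_pos (by linarith : (0:ℝ) < c - 1)]
          have : c - 1 = ε / (2 * ‖y‖) := by rw [hcdef]; ring
          rw [this]
          rw [div_mul_eq_mul_div, mul_comm]
          rw [div_lt_iff₀ (by positivity)]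
          nlinarith
        have hle : suppFn S (c • (-y)) ≤ 1 := hmem2
        have hkey : suppFn S (-y) ≤ c⁻¹ * suppFn S (c • (-y)) := by
          have := suppFn_smul_le hM hS0 (c := c⁻¹) (by positivity) (c • (-y))
          rwa [inv_smul_smul₀ (ne_of_gt hc0)] at this
        have : suppFn S (-y) ≤ c⁻¹ := by
          calc suppFn S (-y) ≤ c⁻¹ * suppFn S (c • (-y)) := hkey
            _ ≤ c⁻¹ * 1 := by
                apply mul_le_mul_of_nonneg_left hle (by positivity)
            _ = c⁻¹ := mul_one _
        have : c⁻¹ < 1 := by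
          rw [inv_lt_one_iff₀]; right; exact hc1
        linarith
    -- compactness: uniform bound c < 1
    have hclP : IsCompact (closure P) := hPbdd.isCompact_closure
    have hclPne : (closure P).Nonempty := ⟨0, subset_closure hP0⟩
    obtain ⟨y₀, hy₀, hy₀max⟩ := hclP.exists_isMaxOn hclPne
      ((hcont.comp continuous_neg).continuousOn)
    set c : ℝ := suppFn S (-y₀) with hcdef
    have hc1 : c < 1 := hstrict y₀ hy₀
    have hcbound : ∀ y ∈ closure P, suppFn S (-y) ≤ c := fun y hy => hy₀max hy
    -- now take p ∈ closure (coneOver P) \ {0}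
    rintro p ⟨hp, hp0⟩
    obtain ⟨u, hu, hulim⟩ := mem_closure_iff_seq_limit.1 hp
    choose z hz s hs hu' using hu
    have hslim : Filter.Tendsto s Filter.atTop (𝓝 p.2) := by
      have : Filter.Tendsto (fun k => (u k).2) Filter.atTop (𝓝 p.2) :=
        (continuous_snd.tendsto p).comp hulim
      convert this using 1
      funext k; rw [hu' k]
    have hp2 : 0 ≤ p.2 := le_of_tendsto_of_tendsto' tendsto_const_nhds hslim (fun k => hs k)
    have hp2pos : 0 < p.2 := by
      rcases lt_or_eq_of_le hp2 with h' | h'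
      · exact h'
      · exfalso
        apply hp0
        have h1lim : Filter.Tendsto (fun k => (u k).1) Filter.atTop (𝓝 p.1) :=
          (continuous_fst.tendsto p).comp hulim
      -- (u k).1 = s k • z k, ‖·‖ ≤ s k * N → 0
        have hnorm : ∀ k, ‖(u k).1‖ ≤ s k * N := by
          intro k
          rw [hu' k]
          simp only [norm_smul, Real.norm_eq_abs, abs_of_nonneg (hs k)]
          exact mul_le_mul_of_nonneg_left (hN _ (hz k)) (hs k)
        have hto0 : Filter.Tendsto (fun k => (u k).1) Filter.atTop (𝓝 0) := by
          apply squeeze_zero_norm hnorm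
          have : Filter.Tendsto (fun k => s k * N) Filter.atTop (𝓝 (p.2 * N)) :=
            hslim.mul_const N
          rwa [← h', zero_mul] at this
        have hp1 : p.1 = 0 := tendsto_nhds_unique h1lim hto0
        have : p = 0 := by
          rw [Prod.ext_iff]
          exact ⟨hp1, h'.symm⟩
        exact this
    -- p = (p.2 • y, p.2) with y ∈ closure P
    set y : Eu n := p.2⁻¹ • p.1 with hydef
    have hymem : y ∈ closure P := by
      have hslim' : ∀ᶠ k in Filter.atTop, 0 < s k := by
        have := hslim.eventually (eventually_gt_nhds (show (0:ℝ) < p.2 from hp2pos) |> id)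
        -- eventually s k > 0? use: eventually s k ∈ (p.2/2, ∞)
        have h2 : ∀ᶠ k in Filter.atTop, p.2 / 2 < s k :=
          hslim.eventually (eventually_gt_nhds (by linarith))
        exact h2.mono (fun k hk => lt_of_le_of_lt (by positivity) hk)
      have hcontdiv : Filter.Tendsto (fun k => (s k)⁻¹ • (u k).1) Filter.atTop (𝓝 y) := by
        have h1lim : Filter.Tendsto (fun k => (u k).1) Filter.atTop (𝓝 p.1) :=
          (continuous_fst.tendsto p).comp hulim
        have hinv : Filter.Tendsto (fun k => (s k)⁻¹) Filter.atTop (𝓝 p.2⁻¹) :=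
          hslim.inv₀ (ne_of_gt hp2pos)
        exact hinv.smul h1lim
      refine mem_closure_of_tendsto hcontdiv ?_
      refine hslim'.mono (fun k hk => ?_)
      rw [hu' k]
      simp only
      rw [inv_smul_smul₀ (ne_of_gt hk)]
      exact hz k
    have hpeq : p = (p.2 • y, p.2) := by
      rw [hydef, Prod.ext_iff]
      constructor
      · simp only
        rw [smul_inv_smul₀ (ne_of_gt hp2pos)]
      · rfl
    -- show p ∈ open strict set ⊆ dualCone
    have hopen : IsOpen {q : Eu n × ℝ | suppFn S (-q.1) < q.2} := by
      apply isOpen_lt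
      · exact hcont.comp (continuous_neg.comp continuous_fst)
      · exact continuous_snd
    have hsub : {q : Eu n × ℝ | suppFn S (-q.1) < q.2} ⊆ dualCone (coneOver S) :=
      fun q hq => strict_subset_dualCone hM hq
    have hpin : p ∈ {q : Eu n × ℝ | suppFn S (-q.1) < q.2} := by
      show suppFn S (-p.1) < p.2
      have h1 : -p.1 = p.2 • (-y) := by
        rw [hpeq]; simp only; rw [smul_neg]
      rw [h1]
      calc suppFn S (p.2 • (-y)) ≤ p.2 * suppFn S (-y) :=
            suppFn_smul_le hM hS0 hp2 (-y)
        _ ≤ p.2 * c := mul_le_mul_of_nonneg_left (hcbound y hymem) hp2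
        _ < p.2 * 1 := by exact mul_lt_mul_of_pos_left hc1 hp2pos
        _ = p.2 := mul_one _
    exact interior_maximal hsub hopen hpin
end
end

section
/- Let v ∈ C⁺(P), u = v* its Legendre transform, w = u + φ_{Σ°} and Ω = {w < 0}. Then for every x ∈ Ω, K(x, −w(x)) ≤ (sup_Σ h_Σ) · (−u(x))^{1+β} / (1+β). -/
open Set MeasureTheory Metric Bornology
open scoped RealInnerProductSpace NNReal Topology

noncomputable section

/-- The class `C⁺(P)` of positive convex functions on `P`. -/
def Cplus {n : ℕ} (P : Set (Eu n)) : Set (Eu n → ℝ) :=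
  {v | ConvexOn ℝ P v ∧ ∀ y ∈ P, 0 < v y}

/-- The Legendre transform `v*(x) = sup_{y ∈ P} (⟨x,y⟩ − v(y))`. -/
def legendre {n : ℕ} (P : Set (Eu n)) (v : Eu n → ℝ) (x : Eu n) : ℝ :=
  sSup ((fun y => ⟪x, y⟫ - v y) '' P)

/-- `K(x,s) = ∫₀^s (σ + φ_{Σ°}(x))^β h_Σ(x/(σ + φ_{Σ°}(x))) dσ`. -/
def Kker {n : ℕ} (S : Set (Eu n)) (hS : Eu n → ℝ) (β : ℝ) (x : Eu n) (s : ℝ) : ℝ :=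
  ∫ σ in (0:ℝ)..s,
    (σ + suppFn (polarDual S) x) ^ β * hS ((σ + suppFn (polarDual S) x)⁻¹ • x)

/-- The support function of a set containing `0` is nonnegative. -/
lemma suppFn_nonneg {n : ℕ} (K : Set (Eu n)) (hK : (0 : Eu n) ∈ K) (x : Eu n) :
    0 ≤ suppFn K x := by
  by_cases hbdd : BddAbove ((fun y => ⟪x, y⟫) '' K)
  · have : (0 : ℝ) ∈ (fun y => ⟪x, y⟫) '' K := ⟨0, hK, by simp⟩
    exact le_csSup hbdd this
  · unfold suppFn
    rw [Real.sSup_of_not_bddAbove hbdd]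

/-- For `v ∈ C⁺(P)`, `u = v*`, `w = u + φ_{Σ°}`, `Ω = {w < 0}`, one has
`K(x, −w(x)) ≤ (sup_Σ h_Σ) (−u(x))^{1+β} / (1+β)` for all `x ∈ Ω`. -/
theorem Kker_le_of_mem_Omega {n : ℕ} (P S : Set (Eu n)) (hS : Eu n → ℝ) (β : ℝ)
    (hPconv : Convex ℝ P) (hPbdd : IsBounded P) (hP0 : (0 : Eu n) ∈ P)
    (hSconv : Convex ℝ S) (hSbdd : IsBounded S) (hS0 : (0 : Eu n) ∈ S)
    (hSnn : ∀ x, 0 ≤ hS x) (hSloc : ∃ M : ℝ, ∀ x, hS x ≤ M)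
    (hSzero : ∀ x ∉ S, hS x = 0) (hβ : -1 < β)
    (v : Eu n → ℝ) (hv : v ∈ Cplus P) (x : Eu n)
    (hx : legendre P v x + suppFn (polarDual S) x < 0) :
    Kker S hS β x (-(legendre P v x + suppFn (polarDual S) x)) ≤
      sSup (hS '' S) * (-(legendre P v x)) ^ (1 + β) / (1 + β) := by
  unfold Kker
  set φ := suppFn (polarDual S) x with hφdef
  set u := legendre P v x with hudef
  set s := -(u + φ) with hsdef
  -- φ ≥ 0 since 0 ∈ polarDual S
  have h0pol : (0 : Eu n) ∈ polarDual S := by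
    have himg : (fun y => ⟪(0 : Eu n), y⟫) '' S = {0} := by
      apply Subset.antisymm
      · rintro t ⟨y, _, rfl⟩; simp
      · rintro t ht; simp only [mem_singleton_iff] at ht
        exact ⟨0, hS0, by simp [ht]⟩
    simp only [polarDual, mem_setOf_eq, suppFn, himg, csSup_singleton]
    norm_num
  have hφ0 : 0 ≤ φ := suppFn_nonneg _ h0pol x
  have hs0 : 0 < s := by simp only [hsdef]; linarith
  set M := sSup (hS '' S) with hMdef
  have hbddM : BddAbove (hS '' S) := by
    obtain ⟨M0, hM0⟩ := hSloc
    exact ⟨M0, by rintro t ⟨y, _, rfl⟩; exact hM0 y⟩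
  have hM0 : 0 ≤ M := le_trans (hSnn 0) (le_csSup hbddM ⟨0, hS0, rfl⟩)
  have hMble : ∀ y, hS y ≤ M := by
    intro y
    by_cases hy : y ∈ S
    · exact le_csSup hbddM ⟨y, hy, rfl⟩
    · rw [hSzero y hy]; exact hM0
  have hβ1 : 0 < 1 + β := by linarith
  have hmu : -u = s + φ := by simp [hsdef]
  have hRHS : 0 ≤ M * (-u) ^ (1 + β) / (1 + β) := by
    apply div_nonneg _ (le_of_lt hβ1)
    exact mul_nonneg hM0 (Real.rpow_nonneg (by rw [hmu]; positivity) _)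
  by_cases hInt : IntervalIntegrable
      (fun σ => (σ + φ) ^ β * hS ((σ + φ)⁻¹ • x)) volume 0 s
  · have hgInt : IntervalIntegrable (fun σ => (σ + φ) ^ β * M) volume 0 s := by
      have h1 : IntervalIntegrable (fun t : ℝ => t ^ β) volume φ (s + φ) :=
        intervalIntegral.intervalIntegrable_rpow' hβ
      have h2 := (h1.comp_add_right φ).mul_const M
      simpa using h2
    have hmono : (∫ σ in (0:ℝ)..s, (σ + φ) ^ β * hS ((σ + φ)⁻¹ • x)) ≤
        ∫ σ in (0:ℝ)..s, (σ + φ) ^ β * M := by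
      apply intervalIntegral.integral_mono_on (le_of_lt hs0) hInt hgInt
      intro σ hσ
      have hσφ : 0 ≤ σ + φ := by have := hσ.1; linarith
      exact mul_le_mul_of_nonneg_left (hMble _) (Real.rpow_nonneg hσφ _)
    have hcalc : (∫ σ in (0:ℝ)..s, (σ + φ) ^ β * M) =
        ((s + φ) ^ (β + 1) - φ ^ (β + 1)) / (β + 1) * M := by
      rw [intervalIntegral.integral_mul_const]
      congr 1
      have := intervalIntegral.integral_comp_add_right (a := (0:ℝ)) (b := s)
        (fun t : ℝ => t ^ β) φ
      rw [this, zero_add, integral_rpow (Or.inl hβ)]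
    calc (∫ σ in (0:ℝ)..s, (σ + φ) ^ β * hS ((σ + φ)⁻¹ • x))
        ≤ ((s + φ) ^ (β + 1) - φ ^ (β + 1)) / (β + 1) * M := hmono.trans hcalc.le
      _ ≤ M * (-u) ^ (1 + β) / (1 + β) := by
          rw [hmu, add_comm 1 β]
          rw [div_mul_eq_mul_div, mul_comm]
          apply div_le_div_of_nonneg_right ?_ (by linarith)
          · apply mul_le_mul_of_nonneg_left _ hM0
            have : 0 ≤ φ ^ (β + 1) := Real.rpow_nonneg hφ0 _
            linarith
  · rw [intervalIntegral.integral_undef hInt]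
    exact hRHS
end
end
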